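/- One has ρ|v_n|/2 + α = (2θ² + ρ² v_n²)/(2√(4θ² + ρ² v_n²)), where α = ρ v_n^- − λ_m³/(θ² + λ_m²) and λ_m = (ρ v_n − √(4θ² + ρ² v_n²))/2. -/

import Mathlib

/-- `ρ|vₙ|/2 + α = (2θ² + ρ² vₙ²)/(2√(4θ² + ρ² vₙ²))`, where
`α = ρ vₙ⁻ − λm³/(θ² + λm²)` and `λm = (ρ vₙ − √(4θ² + ρ² vₙ²))/2`. -/
theorem stmt_10 (ρ θ vn : ℝ) (hρ : 0 < ρ) (hθ : 0 < θ)
    (lm α : ℝ)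
    (hlm : lm = (ρ * vn - Real.sqrt (4 * θ ^ 2 + ρ ^ 2 * vn ^ 2)) / 2)
    (hα : α = ρ * min vn 0 - lm ^ 3 / (θ ^ 2 + lm ^ 2)) :
    ρ * |vn| / 2 + α =
      (2 * θ ^ 2 + ρ ^ 2 * vn ^ 2) / (2 * Real.sqrt (4 * θ ^ 2 + ρ ^ 2 * vn ^ 2)) := by
  set s := Real.sqrt (4 * θ ^ 2 + ρ ^ 2 * vn ^ 2) with hsdef
  have hs : 0 < s := Real.sqrt_pos.mpr (by positivity)
  have hs2 : s ^ 2 = 4 * θ ^ 2 + ρ ^ 2 * vn ^ 2 := Real.sq_sqrt (by positivity)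
  have hkey : θ ^ 2 + lm ^ 2 = -s * lm := by
    rw [hlm]; linear_combination -hs2 / 4
  have hlmneg : lm < 0 := by nlinarith [sq_nonneg lm]
  have hcube : lm ^ 3 / (θ ^ 2 + lm ^ 2) = -lm ^ 2 / s := by
    rw [hkey]; field_simp [hlmneg.ne, hs.ne']
  have hmin : ρ * |vn| / 2 + ρ * min vn 0 = ρ * vn / 2 := by
    rcases le_or_gt vn 0 with h | h
    · rw [abs_of_nonpos h, min_eq_left h]; ring
    · rw [abs_of_pos h, min_eq_right h.le]; ring
  rw [hα, hcube,
    show ρ * |vn| / 2 + (ρ * min vn 0 - -lm ^ 2 / s) = ρ * vn / 2 + lm ^ 2 / s by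
      rw [← hmin]; ring, hlm]
  field_simp
  linear_combination hs2
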